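/- Let C ⊆ ℚ^n be a full-dimensional polyhedral cone, π : ℚ^n → ℚ^d the projection onto the last d coordinates, and F a face of C. If v ∈ π(relint(F)), then π^∨(N_C(F)) = N_{C_v}(F_v), where C_v = π_{n-d}(π^{-1}(v) ∩ C), F_v = π_{n-d}(π^{-1}(v) ∩ F), and π^∨ : (ℚ^n)* → (ℚ^{n-d})* is the projection onto the first n-d coordinates (dual to the inclusion of ker(π)). -/

import Mathlib

open Finset Set Pointwise

noncomputable section

variable {ι : Type*}

/-- The standard pairing between `ι → ℚ` and itself (functionals as vectors). -/
def dotp [Fintype ι] (w x : ι → ℚ) : ℚ := ∑ i, w i * x i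

/-- The face of `P` on which the linear functional `w` attains its minimum. -/
def faceOf [Fintype ι] (P : Set (ι → ℚ)) (w : ι → ℚ) : Set (ι → ℚ) :=
  {x | x ∈ P ∧ ∀ y ∈ P, dotp w x ≤ dotp w y}

/-- `F` is a (nonempty) face of `P`. -/
def IsFaceOf [Fintype ι] (P F : Set (ι → ℚ)) : Prop :=
  F.Nonempty ∧ ∃ w, F = faceOf P w

/-- The (closed) inner normal cone of a face `F` of `P`: all functionals minimized on `F`. -/
def normalCone [Fintype ι] (P F : Set (ι → ℚ)) : Set (ι → ℚ) :=
  {w | F ⊆ faceOf P w}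

/-- The recession cone of `P`. -/
def recCone (P : Set (ι → ℚ)) : Set (ι → ℚ) := {u | ∀ x ∈ P, x + u ∈ P}

/-- The dual cone of `C`. -/
def dualCone [Fintype ι] (C : Set (ι → ℚ)) : Set (ι → ℚ) := {w | ∀ x ∈ C, 0 ≤ dotp w x}

/-- The relative interior of a convex set `S`. -/
def relint (S : Set (ι → ℚ)) : Set (ι → ℚ) :=
  {x | x ∈ S ∧ ∀ y ∈ S, ∃ ε : ℚ, 0 < ε ∧ x + ε • (x - y) ∈ S}

/-- `P` is a polyhedron `{x | A x ≥ b}`. -/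
def IsPolyhedron [Fintype ι] (P : Set (ι → ℚ)) : Prop :=
  ∃ (r : ℕ) (A : Fin r → ι → ℚ) (b : Fin r → ℚ), P = {x | ∀ i, b i ≤ dotp (A i) x}

/-- `C` is a polyhedral cone `{x | A x ≥ 0}`. -/
def IsPolyhedralCone [Fintype ι] (C : Set (ι → ℚ)) : Prop :=
  ∃ (r : ℕ) (A : Fin r → ι → ℚ), C = {x | ∀ i, 0 ≤ dotp (A i) x}

/-- Two polyhedra are normally equivalent: they have the same inner normal fan,
i.e. the same support and the same partition of functionals by faces. -/
def normallyEquiv [Fintype ι] (P P' : Set (ι → ℚ)) : Prop :=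
  (∀ w, (faceOf P w).Nonempty ↔ (faceOf P' w).Nonempty) ∧
  ∀ w w', faceOf P w = faceOf P w' ↔ faceOf P' w = faceOf P' w'

/-- `F` is the smallest face of `P` containing the set `S`. -/
def IsSmallestFaceContaining [Fintype ι] (P S F : Set (ι → ℚ)) : Prop :=
  IsFaceOf P F ∧ S ⊆ F ∧ ∀ G, IsFaceOf P G → S ⊆ G → F ⊆ G

/-- The homogenization `P̃` of `P`: the closure in `(ι ⊕ Unit) → ℚ` of the cone over `P`
placed at height `1`. -/
def tildeSet (P : Set (ι → ℚ)) : Set ((ι ⊕ Unit) → ℚ) :=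
  closure {p | ∃ x ∈ P, ∃ l : ℚ, 0 < l ∧ p = Sum.elim (l • x) (fun _ => l)}

/- ===== auxiliary lemmas ===== -/

section Aux

open Matrix

variable {κ τ : Type*}

lemma dotp_eq_dotProduct [Fintype κ] (w x : κ → ℚ) : dotp w x = w ⬝ᵥ x := rfl

lemma dotp_add_right [Fintype κ] (w x y : κ → ℚ) :
    dotp w (x + y) = dotp w x + dotp w y := by
  simp [dotp_eq_dotProduct, dotProduct_add]

lemma dotp_smul_right [Fintype κ] (c : ℚ) (w x : κ → ℚ) :
    dotp w (c • x) = c * dotp w x := by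
  simp [dotp_eq_dotProduct, dotProduct_smul, smul_eq_mul]

lemma dotp_sub_right [Fintype κ] (w x y : κ → ℚ) :
    dotp w (x - y) = dotp w x - dotp w y := by
  simp [dotp_eq_dotProduct, dotProduct_sub]

lemma dotp_neg_right [Fintype κ] (w x : κ → ℚ) : dotp w (-x) = -dotp w x := by
  simp [dotp_eq_dotProduct, dotProduct_neg]

lemma dotp_zero_left [Fintype κ] (x : κ → ℚ) : dotp 0 x = 0 := by
  simp [dotp_eq_dotProduct, zero_dotProduct]

lemma dotp_self_nonneg [Fintype κ] (x : κ → ℚ) : 0 ≤ dotp x x := by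
  classical
  exact Finset.sum_nonneg fun i _ => mul_self_nonneg (x i)

lemma dotp_sub_smul_left [Fintype κ] (x a y : κ → ℚ) (s : ℚ) :
    dotp (x - s • a) y = dotp x y - s * dotp a y := by
  simp [dotp_eq_dotProduct, sub_dotProduct, smul_dotProduct, smul_eq_mul]

lemma dotp_smul_add_left [Fintype κ] (t : ℚ) (a y z : κ → ℚ) :
    dotp (t • a + y) z = t * dotp a z + dotp y z := by
  simp [dotp_eq_dotProduct, add_dotProduct, smul_dotProduct, smul_eq_mul]

lemma dotp_sub_smul_right [Fintype κ] (x y z : κ → ℚ) (s : ℚ) :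
    dotp x (y - s • z) = dotp x y - s * dotp x z := by
  simp [dotp_eq_dotProduct, dotProduct_sub, dotProduct_smul, smul_eq_mul]

lemma dotp_split [Fintype κ] [Fintype τ] (w x : (κ ⊕ τ) → ℚ) :
    dotp w x = dotp (w ∘ Sum.inl) (x ∘ Sum.inl) + dotp (w ∘ Sum.inr) (x ∘ Sum.inr) := by
  simp [dotp, Fintype.sum_sum_type, Function.comp]

/-- A small positive `ε` making finitely many linear conditions hold. -/
lemma exists_pos_mul_le {α : Type*} (s : Finset α) (a c : α → ℚ)
    (ha : ∀ i ∈ s, 0 < a i) : ∃ ε : ℚ, 0 < ε ∧ ∀ i ∈ s, ε * c i ≤ a i := by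
  classical
  induction s using Finset.induction_on with
  | empty => exact ⟨1, one_pos, by simp⟩
  | @insert i s his ih =>
    obtain ⟨ε, hε, hle⟩ := ih fun j hj => ha j (Finset.mem_insert_of_mem hj)
    have hai : 0 < a i := ha i (Finset.mem_insert_self i s)
    have h2 : (0:ℚ) < |c i| + 1 := by positivity
    have hδ : (0:ℚ) < min ε (a i / (|c i| + 1)) := lt_min hε (by positivity)
    refine ⟨min ε (a i / (|c i| + 1)), hδ, ?_⟩
    intro j hj
    rcases Finset.mem_insert.1 hj with rfl | hj
    · calc min ε (a j / (|c j| + 1)) * c j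
          ≤ min ε (a j / (|c j| + 1)) * (|c j| + 1) :=
            mul_le_mul_of_nonneg_left (by linarith [le_abs_self (c j)]) hδ.le
        _ ≤ (a j / (|c j| + 1)) * (|c j| + 1) :=
            mul_le_mul_of_nonneg_right (min_le_right _ _) h2.le
        _ = a j := div_mul_cancel₀ _ h2.ne'
    · rcases le_or_gt 0 (c j) with hc | hc
      · calc min ε (a i / (|c i| + 1)) * c j ≤ ε * c j :=
            mul_le_mul_of_nonneg_right (min_le_left _ _) hc
          _ ≤ a j := hle j hj
      · nlinarith [ha j (Finset.mem_insert_of_mem hj)]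

/-- The cone generated by a list of vectors. -/
def coneOf : List (κ → ℚ) → Set (κ → ℚ)
  | [] => {0}
  | a :: l => {x | ∃ t : ℚ, 0 ≤ t ∧ ∃ y ∈ coneOf l, x = t • a + y}

lemma coneOf_dotp_nonneg [Fintype κ] :
    ∀ (l : List (κ → ℚ)) (z : κ → ℚ), (∀ u ∈ l, 0 ≤ dotp u z) →
      ∀ x ∈ coneOf l, 0 ≤ dotp x z := by
  intro l
  induction l with
  | nil =>
    intro z _ x hx
    rw [Set.mem_singleton_iff.1 hx, dotp_zero_left]
  | cons a l ih =>
    rintro z h x ⟨t, ht, y, hy, rfl⟩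
    rw [dotp_smul_add_left]
    have h1 := ih z (fun u hu => h u (List.mem_cons_of_mem _ hu)) y hy
    have h2 := h a List.mem_cons_self
    nlinarith

lemma coneOf_dotp_eq_zero [Fintype κ] :
    ∀ (l : List (κ → ℚ)) (z : κ → ℚ), (∀ u ∈ l, dotp u z = 0) →
      ∀ x ∈ coneOf l, dotp x z = 0 := by
  intro l
  induction l with
  | nil =>
    intro z _ x hx
    rw [Set.mem_singleton_iff.1 hx, dotp_zero_left]
  | cons a l ih =>
    rintro z h x ⟨t, ht, y, hy, rfl⟩
    rw [dotp_smul_add_left, ih z (fun u hu => h u (List.mem_cons_of_mem _ hu)) y hy,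
      h a List.mem_cons_self]
    ring

lemma coneOf_lift {α : Type*} (A : α → (κ ⊕ τ) → ℚ) :
    ∀ (l : List α) (x : κ → ℚ), x ∈ coneOf (l.map fun i => A i ∘ Sum.inl) →
      ∃ W ∈ coneOf (l.map A), W ∘ Sum.inl = x := by
  intro l
  induction l with
  | nil =>
    intro x hx
    exact ⟨0, rfl, by rw [Set.mem_singleton_iff.1 hx]; rfl⟩
  | cons i l ih =>
    rintro x ⟨t, ht, y, hy, rfl⟩
    obtain ⟨W, hW, hWl⟩ := ih y hy
    refine ⟨t • A i + W, ⟨t, ht, W, hW, rfl⟩, ?_⟩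
    funext j
    have := congrFun hWl j
    simp only [Function.comp_apply, Pi.add_apply, Pi.smul_apply, smul_eq_mul] at this ⊢
    rw [this]

/-- Farkas lemma over ℚ: a functional nonnegative on the solution cone of
`dotp a · ≥ 0, a ∈ L` lies in the cone generated by `L`. -/
lemma farkasList [Fintype κ] (L : List (κ → ℚ)) (b : κ → ℚ)
    (h : ∀ z, (∀ a ∈ L, 0 ≤ dotp a z) → 0 ≤ dotp b z) : b ∈ coneOf L := by
  classical
  suffices H : ∀ (k : ℕ) (L : List (κ → ℚ)), L.length = k → ∀ b : κ → ℚ,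
      (∀ z, (∀ a ∈ L, 0 ≤ dotp a z) → 0 ≤ dotp b z) → b ∈ coneOf L from
    H L.length L rfl b h
  intro k
  induction k with
  | zero =>
    intro L hL b h
    rw [List.length_eq_zero_iff] at hL
    subst hL
    have h1 := h (-b) (by simp)
    rw [dotp_neg_right] at h1
    have h2 : dotp b b = 0 := le_antisymm (by linarith) (dotp_self_nonneg b)
    rw [dotp_eq_dotProduct] at h2
    have : b = 0 := dotProduct_self_eq_zero.1 h2
    rw [this]
    rfl
  | succ k ih =>
    intro L hL b h
    match L, hL with
    | a :: l, hL =>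
    have hlen : l.length = k := by simpa using hL
    by_cases hc : ∀ z, (∀ u ∈ l, 0 ≤ dotp u z) → 0 ≤ dotp b z
    · exact ⟨0, le_refl 0, b, ih l hlen b hc, by rw [zero_smul, zero_add]⟩
    · push_neg at hc
      obtain ⟨z, hz, hbz⟩ := hc
      have haz : dotp a z < 0 := by
        by_contra h'
        push_neg at h'
        refine absurd (h z fun u hu => ?_) (not_le.2 hbz)
        rcases List.mem_cons.1 hu with rfl | hu
        · exact h'
        · exact hz u hu
      have hcne : dotp a z ≠ 0 := ne_of_lt haz
      set red : (κ → ℚ) → (κ → ℚ) :=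
        fun x => x - (dotp x z / dotp a z) • a with hred
      have hkey : ∀ x y : κ → ℚ,
          dotp (red x) y = dotp x (y - (dotp a y / dotp a z) • z) := by
        intro x y
        rw [hred]
        rw [dotp_sub_smul_left, dotp_sub_smul_right]
        ring
      have hIH : red b ∈ coneOf (l.map red) := by
        refine ih (l.map red) (by simpa using hlen) (red b) ?_
        intro y hy
        rw [hkey]
        refine h (y - (dotp a y / dotp a z) • z) ?_
        intro u hu
        rcases List.mem_cons.1 hu with rfl | hu
        · rw [dotp_sub_smul_right, div_mul_cancel₀ _ hcne, sub_self]
        · rw [← hkey u y]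
          exact hy (red u) (List.mem_map_of_mem (f := red) hu)
      have hback : ∀ (l' : List (κ → ℚ)), (∀ u ∈ l', 0 ≤ dotp u z) →
          ∀ x ∈ coneOf (l'.map red), ∃ y ∈ coneOf l', ∃ s : ℚ, 0 ≤ s ∧
            x = y - (s / dotp a z) • a := by
        intro l'
        induction l' with
        | nil =>
          intro _ x hx
          exact ⟨0, rfl, 0, le_refl 0, by rw [Set.mem_singleton_iff.1 hx]; simp⟩
        | cons u l' ihl =>
          rintro hu x ⟨t, ht, y₁, hy₁, rfl⟩
          obtain ⟨y₂, hy₂, s, hs, hx₁⟩ :=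
            ihl (fun u' h' => hu u' (List.mem_cons_of_mem _ h')) y₁ hy₁
          refine ⟨t • u + y₂, ⟨t, ht, y₂, hy₂, rfl⟩, t * dotp u z + s,
            add_nonneg (mul_nonneg ht (hu u List.mem_cons_self)) hs, ?_⟩
          funext j
          have h1 := congrFun hx₁ j
          simp only [hred, Pi.sub_apply, Pi.smul_apply, Pi.add_apply, smul_eq_mul] at h1 ⊢
          field_simp at h1 ⊢
          linear_combination h1
      obtain ⟨y, hy, s, hs, hxy⟩ := hback l hz (red b) hIH
      refine ⟨(dotp b z - s) / dotp a z, ?_, y, hy, ?_⟩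
      · have heq : (dotp b z - s) / dotp a z = (s - dotp b z) / (-dotp a z) := by
          rw [div_eq_div_iff hcne (by linarith)]
          ring
        rw [heq]
        exact div_nonneg (by linarith) (by linarith)
      · funext j
        have h1 := congrFun hxy j
        simp only [hred, Pi.sub_apply, Pi.smul_apply, Pi.add_apply, smul_eq_mul] at h1 ⊢
        field_simp at h1 ⊢
        linear_combination h1

end Aux

/-- for a face `F` of a full-dimensional cone `C` and `v ∈ π(relint F)`,
`π^∨(N_C(F)) = N_{C_v}(F_v)`. -/
theorem proj_normalCone_eq (m d : ℕ) (C : Set ((Fin m ⊕ Fin d) → ℚ))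
    (hC : IsPolyhedralCone C) (hfull : Submodule.span ℚ C = ⊤)
    (F : Set ((Fin m ⊕ Fin d) → ℚ)) (hF : IsFaceOf C F)
    (v : Fin d → ℚ)
    (hv : v ∈ (fun x : (Fin m ⊕ Fin d) → ℚ => x ∘ Sum.inr) '' relint F) :
    (fun w : (Fin m ⊕ Fin d) → ℚ => w ∘ Sum.inl) '' normalCone C F
      = normalCone {x' : Fin m → ℚ | Sum.elim x' v ∈ C}
          {x' : Fin m → ℚ | Sum.elim x' v ∈ F} := by
  classical
  obtain ⟨r, A, hCA⟩ := hC
  obtain ⟨hFne, w₀, hFface⟩ := hF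
  have hFC : F ⊆ C := by
    rw [hFface]; exact fun x hx => hx.1
  obtain ⟨x₀, ⟨hx₀F, hx₀rel⟩, hx₀v⟩ := hv
  have hx₀C : x₀ ∈ C := hFC hx₀F
  have hAx₀ : ∀ i, 0 ≤ dotp (A i) x₀ := by
    rw [hCA] at hx₀C; exact hx₀C
  set I : Finset (Fin r) := Finset.univ.filter (fun i => dotp (A i) x₀ = 0) with hI
  -- active constraints vanish on all of F
  have factA : ∀ x ∈ F, ∀ i ∈ I, dotp (A i) x = 0 := by
    intro x hx i hi
    have hiz : dotp (A i) x₀ = 0 := (Finset.mem_filter.1 hi).2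
    obtain ⟨ε, hε, hmem⟩ := hx₀rel x hx
    have hmemC : x₀ + ε • (x₀ - x) ∈ C := hFC hmem
    rw [hCA] at hmemC
    have h1 := hmemC i
    rw [dotp_add_right, dotp_smul_right, dotp_sub_right, hiz] at h1
    have hxC : x ∈ C := hFC hx
    rw [hCA] at hxC
    have h2 := hxC i
    nlinarith
  have helim : Sum.elim (x₀ ∘ Sum.inl) v = x₀ := by
    rw [← hx₀v]; exact Sum.elim_comp_inl_inr x₀
  apply Set.Subset.antisymm
  · -- easy inclusion
    rintro w'' ⟨w, hwNC, rfl⟩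
    intro x' hx'
    have hface := hwNC hx'
    refine ⟨hface.1, ?_⟩
    intro y' hy'
    have h1 := hface.2 (Sum.elim y' v) hy'
    rw [dotp_split w (Sum.elim x' v), dotp_split w (Sum.elim y' v),
      Sum.elim_comp_inl, Sum.elim_comp_inr, Sum.elim_comp_inl, Sum.elim_comp_inr] at h1
    linarith
  · -- hard inclusion
    intro w' hw'
    have hx₀'Fv : (x₀ ∘ Sum.inl) ∈ {x' : Fin m → ℚ | Sum.elim x' v ∈ F} := by
      show Sum.elim (x₀ ∘ Sum.inl) v ∈ F
      rw [helim]; exact hx₀F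
    obtain ⟨hx₀'Cv, hmin⟩ := hw' hx₀'Fv
    -- w' is nonnegative on the cone cut out by the active constraints
    set L : List (Fin m → ℚ) := I.toList.map (fun i => A i ∘ Sum.inl) with hLdef
    have hK : ∀ z, (∀ a ∈ L, 0 ≤ dotp a z) → 0 ≤ dotp w' z := by
      intro z hz
      have hz' : ∀ i ∈ I, 0 ≤ dotp (A i ∘ Sum.inl) z := by
        intro i hi
        exact hz _ (List.mem_map_of_mem (f := fun i => A i ∘ Sum.inl) (Finset.mem_toList.2 hi))
      have hapos : ∀ i ∈ Finset.univ.filter (fun i => i ∉ I), 0 < dotp (A i) x₀ := by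
        intro i hi
        have hiI : i ∉ I := (Finset.mem_filter.1 hi).2
        have hne : dotp (A i) x₀ ≠ 0 := by
          intro h0
          exact hiI (Finset.mem_filter.2 ⟨Finset.mem_univ i, h0⟩)
        exact lt_of_le_of_ne (hAx₀ i) (Ne.symm hne)
      obtain ⟨ε, hε, hεle⟩ := exists_pos_mul_le (Finset.univ.filter (fun i => i ∉ I))
        (fun i => dotp (A i) x₀) (fun i => -dotp (A i ∘ Sum.inl) z) hapos
      have hsplit : ∀ i, dotp (A i) (Sum.elim (x₀ ∘ Sum.inl + ε • z) v)
          = dotp (A i) x₀ + ε * dotp (A i ∘ Sum.inl) z := by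
        intro i
        rw [dotp_split (A i) (Sum.elim _ v), Sum.elim_comp_inl, Sum.elim_comp_inr,
          dotp_add_right, dotp_smul_right, ← hx₀v,
          dotp_split (A i) x₀]
        ring
      have hyC : (x₀ ∘ Sum.inl + ε • z) ∈ {x' : Fin m → ℚ | Sum.elim x' v ∈ C} := by
        show Sum.elim (x₀ ∘ Sum.inl + ε • z) v ∈ C
        rw [hCA]
        intro i
        rw [hsplit i]
        by_cases hiI : i ∈ I
        · have h0 : dotp (A i) x₀ = 0 := (Finset.mem_filter.1 hiI).2
          rw [h0]
          have := hz' i hiI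
          nlinarith
        · have := hεle i (Finset.mem_filter.2 ⟨Finset.mem_univ i, hiI⟩)
          nlinarith
      have h1 := hmin _ hyC
      rw [dotp_add_right, dotp_smul_right] at h1
      nlinarith
    have hw'cone : w' ∈ coneOf L := farkasList L w' hK
    obtain ⟨w, hwcone, hwinl⟩ := coneOf_lift A I.toList w' hw'cone
    refine ⟨w, ?_, hwinl⟩
    intro x hx
    refine ⟨hFC hx, ?_⟩
    intro y hy
    have hwx : dotp w x = 0 := by
      refine coneOf_dotp_eq_zero (I.toList.map A) x ?_ w hwcone
      intro u hu
      obtain ⟨i, hi, rfl⟩ := List.mem_map.1 hu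
      exact factA x hx i (Finset.mem_toList.1 hi)
    have hwy : 0 ≤ dotp w y := by
      refine coneOf_dotp_nonneg (I.toList.map A) y ?_ w hwcone
      intro u hu
      obtain ⟨i, hi, rfl⟩ := List.mem_map.1 hu
      rw [hCA] at hy
      exact hy i
    rw [hwx]
    exact hwy
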